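/- Let G be the graph obtained by subdividing every edge of the complete graph K_n exactly once, n ≥ 2. Then box(G) ≥ (⌈log₂ log₂ n⌉ + 1)/2. -/

import Mathlib

/-- A `k`-box representation of a simple graph: each vertex gets an axis-parallel box
`∏ i, [l v i, r v i]` in `ℝ^k`, and distinct vertices are adjacent iff their boxes meet. -/
def SimpleGraph.HasBoxRep {V : Type*} (G : SimpleGraph V) (k : ℕ) : Prop :=
  ∃ l r : V → Fin k → ℝ, (∀ v i, l v i ≤ r v i) ∧
    ∀ u v : V, u ≠ v →
      (G.Adj u v ↔ ∀ i, max (l u i) (l v i) ≤ min (r u i) (r v i))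

/-- Boxicity: the minimum `k` such that `G` has a `k`-box representation. -/
noncomputable def SimpleGraph.boxicity {V : Type*} (G : SimpleGraph V) : ℕ :=
  sInf {k | G.HasBoxRep k}

/-- The full subdivision of `H`: every edge of `H` is subdivided exactly once; the new
vertex corresponding to an edge `e` is adjacent exactly to the two endpoints of `e`. -/
def fullSubdivision {V : Type*} (H : SimpleGraph V) : SimpleGraph (V ⊕ H.edgeSet) :=
  SimpleGraph.fromRel (fun a b =>
    match a, b with
    | Sum.inl v, Sum.inr e => v ∈ (e : Sym2 V)
    | _, _ => False)

/-- Every graph on a finite vertex set has a box representation in some dimension. -/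
lemma exists_hasBoxRep {V : Type*} [Finite V] (G : SimpleGraph V) :
    ∃ k, G.HasBoxRep k := by
  classical
  cases nonempty_fintype V
  let I := {p : V × V // p.1 ≠ p.2 ∧ ¬ G.Adj p.1 p.2}
  let N := Fintype.card I
  let e : I ≃ Fin N := Fintype.equivFin I
  refine ⟨N, fun v i => if v = ((e.symm i : I) : V × V).1 then (0:ℝ)
      else if v = ((e.symm i : I) : V × V).2 then 2 else 0,
    fun v i => if v = ((e.symm i : I) : V × V).1 then (1:ℝ)
      else if v = ((e.symm i : I) : V × V).2 then 3 else 3, ?_, ?_⟩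
  · intro v i
    dsimp only
    split_ifs <;> norm_num
  · intro u v huv
    constructor
    · intro hadj i
      obtain ⟨hne, hnadj⟩ := (e.symm i).prop
      dsimp only
      refine max_le (le_min ?_ ?_) (le_min ?_ ?_) <;> split_ifs <;> try norm_num
      · rename_i h1 h2 h3
        exact hnadj ((h2 ▸ h3 ▸ hadj).symm)
      · rename_i h1 h2 h3
        exact hnadj (h2 ▸ h3 ▸ hadj)
    · intro hall
      by_contra hnadj
      have := hall (e ⟨(u, v), huv, hnadj⟩)
      simp only [Equiv.symm_apply_apply] at this
      norm_num [Ne.symm huv] at this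

/-- The key combinatorial lemma (lower bound for 3-suitable families):
if `d` real-valued functions on `Fin n` have the property that for any three distinct
elements `a, b, c` some function puts `a` strictly below both `b` and `c`,
then `n ≤ 2 ^ 2 ^ (d - 1)`. -/
lemma card_le_of_below_prop {n d : ℕ} (f : Fin d → Fin n → ℝ)
    (hP : ∀ a b c : Fin n, a ≠ b → a ≠ c → b ≠ c →
      ∃ j, f j a < f j b ∧ f j a < f j c) :
    n ≤ 2 ^ 2 ^ (d - 1) := by
  classical
  rcases Nat.eq_zero_or_pos d with hd | hd
  · subst hd
    by_contra h
    push_neg at h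
    have h3 : 2 < n := by simpa using h
    obtain ⟨j, -, -⟩ := hP ⟨0, by omega⟩ ⟨1, by omega⟩ ⟨2, by omega⟩
      (Fin.ne_of_val_ne (by norm_num)) (Fin.ne_of_val_ne (by norm_num))
      (Fin.ne_of_val_ne (by norm_num))
    exact j.elim0
  · set R : Fin d → Fin n → Fin n → Prop :=
      fun j u v => f j u < f j v ∨ (f j u = f j v ∧ u < v) with hRdef
    have Rasymm : ∀ j u v, R j u v → R j v u → False := by
      intro j u v h1 h2
      rcases h1 with h1 | ⟨h1, h1'⟩ <;> rcases h2 with h2 | ⟨h2, h2'⟩ <;>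
        first
          | linarith
          | exact absurd (h1'.trans h2') (lt_irrefl u)
    have Rtotal : ∀ j u v, u ≠ v → R j u v ∨ R j v u := by
      intro j u v huv
      rcases lt_trichotomy (f j u) (f j v) with h | h | h
      · exact Or.inl (Or.inl h)
      · rcases huv.lt_or_gt with h' | h'
        · exact Or.inl (Or.inr ⟨h, h'⟩)
        · exact Or.inr (Or.inr ⟨h.symm, h'⟩)
      · exact Or.inr (Or.inl h)
    let z : Fin d := ⟨0, hd⟩
    let ix : Fin (d - 1) → Fin d := fun j => ⟨j.val + 1, by have := j.isLt; omega⟩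
    let sig : Fin n → ((Fin (d - 1) → Bool) → Prop) :=
      fun u T => ∃ v, v ≠ u ∧ R z u v ∧ ∀ j : Fin (d - 1), (R (ix j) u v ↔ T j = true)
    have key : ∀ u v : Fin n, u ≠ v → R z u v → sig u ≠ sig v := by
      intro u v huv h0 hsig
      have hu : sig u (fun j => decide (R (ix j) u v)) :=
        ⟨v, Ne.symm huv, h0, fun j => (decide_eq_true_iff).symm⟩
      rw [hsig] at hu
      obtain ⟨w, hwv, h0', hpat⟩ := hu
      have hwu : w ≠ u := by
        intro hq
        rw [hq] at h0'
        exact Rasymm z u v h0 h0'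
      obtain ⟨j, hj1, hj2⟩ := hP v u w (Ne.symm huv) (Ne.symm hwv) (Ne.symm hwu)
      have hRvu : R j v u := Or.inl hj1
      have hRvw : R j v w := Or.inl hj2
      rcases Nat.eq_zero_or_pos j.val with hj0 | hjpos
      · have hz : j = z := Fin.ext hj0
        exact Rasymm z u v h0 (hz ▸ hRvu)
      · have hjlt : j.val - 1 < d - 1 := by have := j.isLt; omega
        have hix : ix ⟨j.val - 1, hjlt⟩ = j := Fin.ext (by simp [ix]; omega)
        have h1 : R (ix ⟨j.val - 1, hjlt⟩) v w ↔
            decide (R (ix ⟨j.val - 1, hjlt⟩) u v) = true := hpat ⟨j.val - 1, hjlt⟩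
        rw [hix] at h1
        have huv' : R j u v := (decide_eq_true_iff).mp (h1.mp hRvw)
        exact Rasymm j u v huv' hRvu
    have hinj : Function.Injective sig := by
      intro u v h
      by_contra hne
      rcases Rtotal z u v hne with h0 | h0
      · exact key u v hne h0 h
      · exact key v u (Ne.symm hne) h0 h.symm
    have hcard := Fintype.card_le_of_injective sig hinj
    have c1 : Fintype.card (Fin n) = n := Fintype.card_fin n
    have c2 : Fintype.card ((Fin (d - 1) → Bool) → Prop) = 2 ^ 2 ^ (d - 1) := by
      rw [Fintype.card_fun, Fintype.card_fun]
      norm_num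
    rw [c1, c2] at hcard
    exact hcard

theorem boxicity_fullSubdivision_complete_lower (n : ℕ) (hn : 2 ≤ n) :
    ((Nat.clog 2 (Nat.clog 2 n) + 1 : ℕ) : ℝ) / 2 ≤
      ((fullSubdivision (⊤ : SimpleGraph (Fin n))).boxicity : ℝ) := by
  classical
  obtain ⟨k₀, hk₀⟩ := exists_hasBoxRep (fullSubdivision (⊤ : SimpleGraph (Fin n)))
  have hne : {k | (fullSubdivision (⊤ : SimpleGraph (Fin n))).HasBoxRep k}.Nonempty :=
    ⟨k₀, hk₀⟩
  set m := (fullSubdivision (⊤ : SimpleGraph (Fin n))).boxicity with hm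
  have hmem : (fullSubdivision (⊤ : SimpleGraph (Fin n))).HasBoxRep m := by
    rw [hm, SimpleGraph.boxicity]
    exact Nat.sInf_mem hne
  obtain ⟨l, r, hlr, hiff⟩ := hmem
  -- m ≥ 1
  have hm1 : 1 ≤ m := by
    by_contra h0
    push_neg at h0
    interval_cases m
    have hab : (Sum.inl (⟨0, by omega⟩ : Fin n) :
        Fin n ⊕ (⊤ : SimpleGraph (Fin n)).edgeSet) ≠ Sum.inl ⟨1, by omega⟩ := by
      simp [Fin.ext_iff]
    have hadj := (hiff _ _ hab).mpr (fun i => absurd i.isLt (by omega))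
    rw [fullSubdivision, SimpleGraph.fromRel_adj] at hadj
    simpa using hadj.2
  -- build the 2m functions on Fin n
  have hm0 : 0 < m := hm1
  let F : Fin (2 * m) → Fin n → ℝ := fun j a =>
    if j.val < m then r (Sum.inl a) ⟨j.val % m, Nat.mod_lt _ hm0⟩
    else -(l (Sum.inl a) ⟨j.val % m, Nat.mod_lt _ hm0⟩)
  have key1 : ∀ (i : Fin m) (x : Fin n),
      F ⟨i.val, by have := i.isLt; omega⟩ x = r (Sum.inl x) i := by
    intro i x
    have h : (i : ℕ) < m := i.isLt
    simp only [F, if_pos h]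
    congr 1
    exact Fin.ext (Nat.mod_eq_of_lt h)
  have key2 : ∀ (i : Fin m) (x : Fin n),
      F ⟨m + i.val, by have := i.isLt; omega⟩ x = -(l (Sum.inl x) i) := by
    intro i x
    have h : ¬ (m + i.val < m) := by omega
    simp only [F, if_neg h]
    congr 2
    exact Fin.ext (by simp [Nat.add_mod_left, Nat.mod_eq_of_lt i.isLt])
  have hP : ∀ a b c : Fin n, a ≠ b → a ≠ c → b ≠ c →
      ∃ j, F j a < F j b ∧ F j a < F j c := by
    intro a b c hab hac hbc
    have he : s(b, c) ∈ (⊤ : SimpleGraph (Fin n)).edgeSet := by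
      simp [hbc]
    set E : (⊤ : SimpleGraph (Fin n)).edgeSet := ⟨s(b, c), he⟩ with hE
    have hmemb : b ∈ (E : Sym2 (Fin n)) := Sym2.mem_iff.mpr (Or.inl rfl)
    have hmemc : c ∈ (E : Sym2 (Fin n)) := Sym2.mem_iff.mpr (Or.inr rfl)
    have hAdjB : (fullSubdivision (⊤ : SimpleGraph (Fin n))).Adj (Sum.inl b) (Sum.inr E) :=
      (SimpleGraph.fromRel_adj _ _ _).mpr ⟨by simp, Or.inl hmemb⟩
    have hAdjC : (fullSubdivision (⊤ : SimpleGraph (Fin n))).Adj (Sum.inl c) (Sum.inr E) :=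
      (SimpleGraph.fromRel_adj _ _ _).mpr ⟨by simp, Or.inl hmemc⟩
    have hNAdjA : ¬ (fullSubdivision (⊤ : SimpleGraph (Fin n))).Adj (Sum.inl a) (Sum.inr E) := by
      intro h
      rcases ((SimpleGraph.fromRel_adj _ _ _).mp h).2 with h' | h'
      · have h'' : a ∈ s(b, c) := h'
        rcases Sym2.mem_iff.mp h'' with h3 | h3
        · exact hab h3
        · exact hac h3
      · exact h'
    have hBall := (hiff _ _ (by simp)).mp hAdjB
    have hCall := (hiff _ _ (by simp)).mp hAdjC
    have hAex : ∃ i, ¬ (max (l (Sum.inl a) i) (l (Sum.inr E) i) ≤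
        min (r (Sum.inl a) i) (r (Sum.inr E) i)) := by
      by_contra hc
      push_neg at hc
      exact hNAdjA ((hiff _ _ (by simp)).mpr (by
        intro i
        have := hc i
        linarith [this]))
    obtain ⟨i, hi⟩ := hAex
    have hdisj : r (Sum.inl a) i < l (Sum.inr E) i ∨ r (Sum.inr E) i < l (Sum.inl a) i := by
      by_contra hcon
      push_neg at hcon
      exact hi (max_le (le_min (hlr _ _) hcon.2) (le_min hcon.1 (hlr _ _)))
    have hBr : l (Sum.inr E) i ≤ r (Sum.inl b) i :=
      le_trans (le_max_right _ _) ((hBall i).trans (min_le_left _ _))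
    have hBl : l (Sum.inl b) i ≤ r (Sum.inr E) i :=
      le_trans (le_max_left _ _) ((hBall i).trans (min_le_right _ _))
    have hCr : l (Sum.inr E) i ≤ r (Sum.inl c) i :=
      le_trans (le_max_right _ _) ((hCall i).trans (min_le_left _ _))
    have hCl : l (Sum.inl c) i ≤ r (Sum.inr E) i :=
      le_trans (le_max_left _ _) ((hCall i).trans (min_le_right _ _))
    rcases hdisj with hcase | hcase
    · refine ⟨⟨i.val, by have := i.isLt; omega⟩, ?_, ?_⟩
      · rw [key1 i a, key1 i b]; linarith
      · rw [key1 i a, key1 i c]; linarith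
    · refine ⟨⟨m + i.val, by have := i.isLt; omega⟩, ?_, ?_⟩
      · rw [key2 i a, key2 i b]; linarith
      · rw [key2 i a, key2 i c]; linarith
  have hcard : n ≤ 2 ^ 2 ^ (2 * m - 1) := card_le_of_below_prop F hP
  have hc1 : Nat.clog 2 n ≤ 2 ^ (2 * m - 1) :=
    (Nat.clog_le_iff_le_pow one_lt_two).mpr hcard
  have hc2 : Nat.clog 2 (Nat.clog 2 n) ≤ 2 * m - 1 :=
    (Nat.clog_le_iff_le_pow one_lt_two).mpr hc1
  have hfin : Nat.clog 2 (Nat.clog 2 n) + 1 ≤ 2 * m := by omega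
  rw [div_le_iff₀ (by norm_num : (0:ℝ) < 2)]
  have := (Nat.cast_le (α := ℝ)).mpr hfin
  push_cast at this ⊢
  linarith
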